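/- The decoding distance d(S₁,S₂) = max(|S₁|,|S₂|) − x(S₁,S₂) defines a metric on the set of all finite strings (lists) over an alphabet α: it is non-negative, vanishes exactly on equal pairs, is symmetric, and satisfies the triangle inequality; hence List α carries a metric space structure with this distance. -/

import Mathlib

/-- Length of the longest common prefix of two lists. -/
def lcpLength {α : Type*} [DecidableEq α] : List α → List α → ℕ
  | a :: as, b :: bs => if a = b then lcpLength as bs + 1 else 0
  | _, _ => 0

/-- `lcsLength S₁ S₂` is the length of the longest common suffix of `S₁` and `S₂`. -/
def lcsLength {α : Type*} [DecidableEq α] (S₁ S₂ : List α) : ℕ :=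
  lcpLength S₁.reverse S₂.reverse

/-- The decoding distance `d(S₁,S₂) = max(|S₁|,|S₂|) − x(S₁,S₂)`, where
`x(S₁,S₂)` is the length of the longest common suffix of `S₁` and `S₂`. -/
def decodingDist {α : Type*} [DecidableEq α] (S₁ S₂ : List α) : ℕ :=
  max S₁.length S₂.length - lcsLength S₁ S₂

lemma lcpLength_le_left {α : Type*} [DecidableEq α] :
    ∀ a b : List α, lcpLength a b ≤ a.length
  | [], _ => by simp [lcpLength]
  | _ :: _, [] => by simp [lcpLength]
  | x :: xs, y :: ys => by
      by_cases h : x = y <;> simp [lcpLength, h]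
      exact lcpLength_le_left xs ys

lemma lcpLength_comm {α : Type*} [DecidableEq α] :
    ∀ a b : List α, lcpLength a b = lcpLength b a
  | [], [] => rfl
  | [], _ :: _ => rfl
  | _ :: _, [] => rfl
  | x :: xs, y :: ys => by
      by_cases h : x = y
      · simp [lcpLength, h, lcpLength_comm xs ys]
      · simp [lcpLength, h, Ne.symm h]

lemma lcpLength_le_right {α : Type*} [DecidableEq α] (a b : List α) :
    lcpLength a b ≤ b.length := by
  rw [lcpLength_comm]; exact lcpLength_le_left b a

lemma lcpLength_self {α : Type*} [DecidableEq α] :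
    ∀ a : List α, lcpLength a a = a.length
  | [] => rfl
  | x :: xs => by simp [lcpLength, lcpLength_self xs]

lemma eq_of_lcpLength {α : Type*} [DecidableEq α] :
    ∀ a b : List α, a.length ≤ lcpLength a b → b.length ≤ lcpLength a b → a = b
  | [], [], _, _ => rfl
  | [], _ :: _, _, h => by simp [lcpLength] at h
  | _ :: _, [], h, _ => by simp [lcpLength] at h
  | x :: xs, y :: ys, h1, h2 => by
      by_cases h : x = y
      · simp only [lcpLength, h, if_true, List.length_cons, Nat.add_le_add_iff_right] at h1 h2
        rw [h, eq_of_lcpLength xs ys h1 h2]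
      · simp [lcpLength, h] at h1

lemma min_lcpLength_le {α : Type*} [DecidableEq α] :
    ∀ a b c : List α, min (lcpLength a b) (lcpLength b c) ≤ lcpLength a c
  | x :: xs, y :: ys, z :: zs => by
      by_cases hxy : x = y
      · by_cases hyz : y = z
        · have := min_lcpLength_le xs ys zs
          simp [lcpLength, hxy, hyz, hxy.trans hyz]
          omega
        · simp [lcpLength, hyz]
      · simp [lcpLength, hxy]
  | [], _, _ => by simp [lcpLength]
  | _ :: _, [], _ => by simp [lcpLength]
  | _ :: _, _ :: _, [] => by simp [lcpLength]

lemma lcsLength_le_left {α : Type*} [DecidableEq α] (a b : List α) :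
    lcsLength a b ≤ a.length := by
  simpa [lcsLength] using lcpLength_le_left a.reverse b.reverse

lemma lcsLength_le_right {α : Type*} [DecidableEq α] (a b : List α) :
    lcsLength a b ≤ b.length := by
  simpa [lcsLength] using lcpLength_le_right a.reverse b.reverse

lemma decodingDist_eq_zero_iff {α : Type*} [DecidableEq α] (a b : List α) :
    decodingDist a b = 0 ↔ a = b := by
  constructor
  · intro h
    have h1 := lcsLength_le_left a b
    have h2 := lcsLength_le_right a b
    unfold decodingDist at h
    have ha : a.length ≤ lcsLength a b := by omega
    have hb : b.length ≤ lcsLength a b := by omega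
    have := eq_of_lcpLength a.reverse b.reverse (by simpa [lcsLength] using ha) (by simpa [lcsLength] using hb)
    exact List.reverse_injective this
  · rintro rfl
    simp [decodingDist, lcsLength, lcpLength_self]

lemma decodingDist_comm {α : Type*} [DecidableEq α] (a b : List α) :
    decodingDist a b = decodingDist b a := by
  simp [decodingDist, lcsLength, lcpLength_comm a.reverse b.reverse, Nat.max_comm]

lemma decodingDist_triangle {α : Type*} [DecidableEq α] (a b c : List α) :
    decodingDist a c ≤ decodingDist a b + decodingDist b c := by
  have hkey := min_lcpLength_le a.reverse b.reverse c.reverse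
  have h1 := lcsLength_le_left a b
  have h2 := lcsLength_le_right a b
  have h3 := lcsLength_le_left b c
  have h4 := lcsLength_le_right b c
  have h5 := lcsLength_le_left a c
  have h6 := lcsLength_le_right a c
  unfold lcsLength at *
  unfold decodingDist
  unfold lcsLength
  simp only [le_min_iff, min_le_iff] at hkey ⊢
  omega

/-- The decoding distance defines a metric on the set of finite strings over an
alphabet `α`: it is non-negative, vanishes exactly on equal pairs, is
symmetric, and satisfies the triangle inequality; hence `List α` carries a
metric space structure whose distance function is the decoding distance. -/
theorem decodingDist_metricSpace {α : Type*} [DecidableEq α] :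
    (∀ S₁ S₂ : List α, 0 ≤ (decodingDist S₁ S₂ : ℝ)) ∧
    (∀ S₁ S₂ : List α, decodingDist S₁ S₂ = 0 ↔ S₁ = S₂) ∧
    (∀ S₁ S₂ : List α, decodingDist S₁ S₂ = decodingDist S₂ S₁) ∧
    (∀ S₁ S₂ S₃ : List α,
      decodingDist S₁ S₃ ≤ decodingDist S₁ S₂ + decodingDist S₂ S₃) ∧
    ∃ m : MetricSpace (List α),
      ∀ S₁ S₂ : List α, @dist (List α) m.toDist S₁ S₂ = decodingDist S₁ S₂ := by
  refine ⟨fun S₁ S₂ => Nat.cast_nonneg _, decodingDist_eq_zero_iff,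
    decodingDist_comm, decodingDist_triangle, ?_⟩
  refine ⟨({
      dist := fun a b => decodingDist a b
      dist_self := fun a => by
        show (decodingDist a a : ℝ) = 0
        exact_mod_cast (decodingDist_eq_zero_iff a a).mpr rfl
      dist_comm := fun a b => by
        show (decodingDist a b : ℝ) = (decodingDist b a : ℝ)
        exact_mod_cast decodingDist_comm a b
      dist_triangle := fun a b c => by
        show (decodingDist a c : ℝ) ≤ (decodingDist a b : ℝ) + (decodingDist b c : ℝ)
        exact_mod_cast decodingDist_triangle a b c
      eq_of_dist_eq_zero := fun {a b} h => by
        have h' : (decodingDist a b : ℝ) = 0 := h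
        have : decodingDist a b = 0 := by exact_mod_cast h'
        exact (decodingDist_eq_zero_iff a b).mp this
      edist_dist := fun a b => by
        simp [ENNReal.ofReal] } : MetricSpace (List α)),
    fun _ _ => rfl⟩
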